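/- Let m be a positive real number and let N be a Poisson random variable with mean m (i.e. P(N = n) = e^{-m} m^n / n! for n ∈ ℕ). Then E[ 1_{[N ≥ 1]} / N² ] ≤ 6 / m², i.e. ∑_{n=1}^{∞} e^{-m} m^n / (n² · n!) ≤ 6 / m². -/

import Mathlib

/-- Poisson moment estimate: if `N` is Poisson with mean `m > 0`, i.e.
`P(N = n) = e^{-m} m^n / n!`, then `E[1_{[N ≥ 1]}/N²] = ∑_{n≥1} e^{-m} m^n/(n² n!) ≤ 6/m²`. -/
theorem stmt0 (m : ℝ) (hm : 0 < m) :
    ∑' n : ℕ, (if 1 ≤ n then Real.exp (-m) * m ^ n / ((n : ℝ) ^ 2 * n.factorial) else 0)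
      ≤ 6 / m ^ 2 := by
  have hsum : Summable (fun n : ℕ => m ^ n / n.factorial) :=
    Real.summable_pow_div_factorial m
  have hsum2 : Summable (fun n : ℕ => m ^ (n + 2) / (n + 2).factorial) :=
    (summable_nat_add_iff 2).mpr hsum
  set g : ℕ → ℝ := fun n => 6 / m ^ 2 * (Real.exp (-m) * (m ^ (n + 2) / (n + 2).factorial))
    with hg
  have hgsum : Summable g := (hsum2.mul_left _).mul_left _
  have hfg : ∀ n : ℕ,
      (if 1 ≤ n then Real.exp (-m) * m ^ n / ((n : ℝ) ^ 2 * n.factorial) else 0) ≤ g n := by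
    intro n
    by_cases h : 1 ≤ n
    · simp only [h, if_true, hg]
      have hfac : ((n + 2).factorial : ℝ) = ((n + 2) * (n + 1)) * n.factorial := by
        rw [Nat.factorial_succ, Nat.factorial_succ]
        push_cast
        ring
      have hn1 : (1 : ℝ) ≤ n := by exact_mod_cast h
      have hnpos : (0 : ℝ) < n := by linarith
      have hfacpos : (0 : ℝ) < n.factorial := by positivity
      have key : ((n : ℝ) + 2) * ((n : ℝ) + 1) ≤ 6 * (n : ℝ) ^ 2 := by nlinarith
      rw [div_le_iff₀ (by positivity)]
      have hm2 : m ^ (n + 2) = m ^ n * m ^ 2 := by ring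
      rw [hfac, hm2]
      have hexp : 0 < Real.exp (-m) := Real.exp_pos _
      have hmn : (0 : ℝ) < m ^ n := by positivity
      have heq : 6 / m ^ 2 * (Real.exp (-m) * (m ^ n * m ^ 2 /
            (((n : ℝ) + 2) * ((n : ℝ) + 1) * n.factorial))) * ((n : ℝ) ^ 2 * n.factorial)
          = Real.exp (-m) * m ^ n * (6 * (n : ℝ) ^ 2 / (((n : ℝ) + 2) * ((n : ℝ) + 1))) := by
        field_simp
      rw [heq]
      have hr : (1 : ℝ) ≤ 6 * (n : ℝ) ^ 2 / (((n : ℝ) + 2) * ((n : ℝ) + 1)) :=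
        (one_le_div (by positivity)).mpr key
      exact le_mul_of_one_le_right (by positivity) hr
    · simp only [h, if_false, hg]
      positivity
  have hfsum : Summable
      (fun n : ℕ => if 1 ≤ n then Real.exp (-m) * m ^ n / ((n : ℝ) ^ 2 * n.factorial) else 0) := by
    refine Summable.of_nonneg_of_le (fun n => ?_) hfg hgsum
    by_cases h : 1 ≤ n <;> simp [h] <;> positivity
  calc ∑' n : ℕ, (if 1 ≤ n then Real.exp (-m) * m ^ n / ((n : ℝ) ^ 2 * n.factorial) else 0)
      ≤ ∑' n, g n := Summable.tsum_le_tsum hfg hfsum hgsum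
    _ = 6 / m ^ 2 * (Real.exp (-m) * ∑' n, m ^ (n + 2) / (n + 2).factorial) := by
        rw [hg]; rw [tsum_mul_left, tsum_mul_left]
    _ ≤ 6 / m ^ 2 * (Real.exp (-m) * Real.exp m) := by
        have h1 : ∑' n : ℕ, m ^ (n + 2) / ((n + 2).factorial : ℝ)
            ≤ ∑' n : ℕ, m ^ n / (n.factorial : ℝ) := by
          refine Summable.tsum_le_tsum_of_inj (fun n => n + 2) (add_left_injective 2)
            (fun c _ => by positivity) (fun n => le_refl _) hsum2 hsum
        have h2 : ∑' n : ℕ, m ^ n / (n.factorial : ℝ) = Real.exp m := by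
          rw [Real.exp_eq_exp_ℝ, NormedSpace.exp_eq_tsum_div]
        exact mul_le_mul_of_nonneg_left
          (mul_le_mul_of_nonneg_left (h2 ▸ h1) (Real.exp_pos _).le) (by positivity)
    _ = 6 / m ^ 2 := by rw [← Real.exp_add]; simp
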